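/- Let σ ∈ S_N be a permutation avoiding the pattern 3412. Then either columns σ(N) and N of Γ[id,σ] are identical (i.e. for every row index i, (i, σ(N)) ∈ Γ[id,σ] if and only if (i, N) ∈ Γ[id,σ]), or rows σ^{−1}(N) and N of Γ[id,σ] are identical (i.e. for every column index j, (σ^{−1}(N), j) ∈ Γ[id,σ] if and only if (N, j) ∈ Γ[id,σ]). -/

import Mathlib

/-- `σ ∈ S_N` contains the pattern `τ ∈ S_k` : there are indices `i_1 < ⋯ < i_k` with
`σ(i_s) < σ(i_t) ↔ τ(s) < τ(t)` for all `s, t`. -/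
def ContainsPattern {N k : ℕ} (σ : Equiv.Perm (Fin N)) (τ : Equiv.Perm (Fin k)) : Prop :=
  ∃ g : Fin k ↪o Fin N, ∀ s t : Fin k, σ (g s) < σ (g t) ↔ τ s < τ t

/-- `σ` avoids the pattern `τ`. -/
def Avoids {N k : ℕ} (σ : Equiv.Perm (Fin N)) (τ : Equiv.Perm (Fin k)) : Prop :=
  ¬ ContainsPattern σ τ

/-- The pattern `4231` (in one-line notation), as a permutation of `Fin 4`. -/
def perm4231 : Equiv.Perm (Fin 4) := Equiv.swap 0 3

/-- The pattern `3412` (in one-line notation), as a permutation of `Fin 4`. -/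
def perm3412 : Equiv.Perm (Fin 4) := Equiv.swap 0 2 * Equiv.swap 1 3

/-- The Bruhat order on `S_N`, characterized by:
`σ' ≤ σ` iff `#{k ≤ i : σ'(k) ≥ j} ≤ #{k ≤ i : σ(k) ≥ j}` for all `i, j`. -/
def BruhatLE {N : ℕ} (σ' σ : Equiv.Perm (Fin N)) : Prop :=
  ∀ i j : Fin N,
    (Finset.univ.filter fun k => k ≤ i ∧ j ≤ σ' k).card ≤
      (Finset.univ.filter fun k => k ≤ i ∧ j ≤ σ k).card

instance {N : ℕ} (σ' σ : Equiv.Perm (Fin N)) : Decidable (BruhatLE σ' σ) := by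
  unfold BruhatLE; infer_instance

/-- `Γ[id,σ] = {(i, σ'(i)) : σ' ≤ σ}`. -/
def Gamma {N : ℕ} (σ : Equiv.Perm (Fin N)) : Set (Fin N × Fin N) :=
  {p | ∃ σ' : Equiv.Perm (Fin N), BruhatLE σ' σ ∧ σ' p.1 = p.2}

open Classical in
/-- `M|_{Γ[id,σ]}` : the matrix whose `(i,j)` entry is `M i j` if `(i,j) ∈ Γ[id,σ]`
and `0` otherwise. -/
noncomputable def restrictGamma {N : ℕ} {R : Type*} [CommRing R]
    (M : Matrix (Fin N) (Fin N) R) (σ : Equiv.Perm (Fin N)) :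
    Matrix (Fin N) (Fin N) R :=
  Matrix.of fun i j => if (i, j) ∈ Gamma σ then M i j else 0

theorem bruhatTrans {N : ℕ} {a b c : Equiv.Perm (Fin N)} (h1 : BruhatLE a b)
    (h2 : BruhatLE b c) : BruhatLE a c := fun i j => le_trans (h1 i j) (h2 i j)

theorem swapLE {N : ℕ} (σ : Equiv.Perm (Fin N)) (x y : Fin N) (hxy : x ≤ y)
    (hv : σ y ≤ σ x) : BruhatLE (σ * Equiv.swap x y) σ := by
  intro i j
  by_cases hy : y ≤ i
  · apply Finset.card_le_card_of_injOn (Equiv.swap x y)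
    · intro k hk
      simp only [Finset.mem_coe, Finset.mem_filter, Finset.mem_univ, true_and] at hk ⊢
      simp only [Equiv.Perm.mul_apply] at hk ⊢
      refine ⟨?_, hk.2⟩
      rcases eq_or_ne k x with rfl | hkx
      · rw [Equiv.swap_apply_left]; exact hy
      rcases eq_or_ne k y with rfl | hky
      · rw [Equiv.swap_apply_right]; exact le_trans hxy hy
      · rw [Equiv.swap_apply_of_ne_of_ne hkx hky]; exact hk.1
    · exact (Equiv.injective _).injOn
  · apply Finset.card_le_card
    intro k hk
    simp only [Finset.mem_filter, Finset.mem_univ, true_and] at hk ⊢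
    simp only [Equiv.Perm.mul_apply] at hk ⊢
    obtain ⟨hki, hjk⟩ := hk
    refine ⟨hki, ?_⟩
    have hky : k ≠ y := fun h => hy (h ▸ hki)
    rcases eq_or_ne k x with rfl | hkx
    · rw [Equiv.swap_apply_left] at hjk; exact le_trans hjk hv
    · rwa [Equiv.swap_apply_of_ne_of_ne hkx hky] at hjk

theorem nec1 {N : ℕ} {σ : Equiv.Perm (Fin N)} {i j : Fin N} (h : (i, j) ∈ Gamma σ) :
    ∃ k, k ≤ i ∧ j ≤ σ k := by
  obtain ⟨σ', hb, hij⟩ := h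
  have h1 := hb i j
  have hmem : i ∈ Finset.univ.filter fun k => k ≤ i ∧ j ≤ σ' k := by
    simp [hij]
  have hpos : 0 < (Finset.univ.filter fun k => k ≤ i ∧ j ≤ σ k).card :=
    lt_of_lt_of_le (Finset.card_pos.mpr ⟨i, hmem⟩) h1
  obtain ⟨k, hk⟩ := Finset.card_pos.mp hpos
  simp only [Finset.mem_filter, Finset.mem_univ, true_and] at hk
  exact ⟨k, hk⟩

theorem nec2 {n : ℕ} {σ : Equiv.Perm (Fin (n+1))} {i j : Fin (n+1)} (h : (i, j) ∈ Gamma σ) :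
    ∃ k, i ≤ k ∧ σ k ≤ j := by
  by_contra hc
  push_neg at hc
  obtain ⟨σ', hb, hij⟩ := h
  have hii : ¬ i ≤ σ⁻¹ j := by
    intro hle
    have h2 := hc _ hle
    simp only [Equiv.Perm.coe_inv, Equiv.apply_symm_apply] at h2
    exact lt_irrefl _ h2
  have hjn : (j : ℕ) < n := by
    have h1 := hc i le_rfl
    have h2 : (σ i : ℕ) ≤ n := Nat.lt_succ_iff.mp (σ i).isLt
    have := (Fin.lt_def.mp h1)
    omega
  have hipos : 0 < (i : ℕ) := by
    rw [Fin.le_def, not_le] at hii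
    omega
  set i' : Fin (n+1) := ⟨(i : ℕ) - 1, by omega⟩ with hi'
  set j' : Fin (n+1) := ⟨(j : ℕ) + 1, by omega⟩ with hj'
  have hvi : (i' : ℕ) = (i : ℕ) - 1 := rfl
  have hvj : (j' : ℕ) = (j : ℕ) + 1 := rfl
  have hbij := hb i' j'
  have key : ∀ τ : Equiv.Perm (Fin (n+1)), (Finset.univ.filter fun k => j' ≤ τ k).card
      = (Finset.univ.filter fun v => j' ≤ v).card := by
    intro τ
    apply Finset.card_bij (fun k _ => τ k)
    · intro k hk; simp only [Finset.mem_filter, Finset.mem_univ, true_and] at hk ⊢; exact hk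
    · intro k _ k' _ hkk; exact τ.injective hkk
    · intro v hv
      simp only [Finset.mem_filter, Finset.mem_univ, true_and] at hv ⊢
      exact ⟨τ.symm v, by simp [hv], by simp⟩
  have split : ∀ τ : Equiv.Perm (Fin (n+1)),
      (Finset.univ.filter fun k => k ≤ i' ∧ j' ≤ τ k).card
        + (Finset.univ.filter fun k => ¬ k ≤ i' ∧ j' ≤ τ k).card
      = (Finset.univ.filter fun k => j' ≤ τ k).card := by
    intro τ
    have h := Finset.card_filter_add_card_filter_not
      (s := Finset.univ.filter fun k => j' ≤ τ k) (p := fun k => k ≤ i')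
    rw [Finset.filter_filter, Finset.filter_filter] at h
    have e1 : (Finset.univ.filter fun k => j' ≤ τ k ∧ k ≤ i')
        = Finset.univ.filter fun k => k ≤ i' ∧ j' ≤ τ k :=
      Finset.filter_congr fun x _ => and_comm
    have e2 : (Finset.univ.filter fun k => j' ≤ τ k ∧ ¬ k ≤ i')
        = Finset.univ.filter fun k => ¬ k ≤ i' ∧ j' ≤ τ k :=
      Finset.filter_congr fun x _ => and_comm
    rw [e1, e2] at h
    exact h
  have hBσ : (Finset.univ.filter fun k => ¬ k ≤ i' ∧ j' ≤ σ k)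
      = Finset.univ.filter fun k => i ≤ k := by
    ext k
    simp only [Finset.mem_filter, Finset.mem_univ, true_and, Fin.le_def, not_le, Fin.lt_def]
    constructor
    · intro hk; omega
    · intro hk
      have hv := Fin.lt_def.mp (hc k (Fin.le_def.mpr hk))
      omega
  have hiB : i ∈ Finset.univ.filter fun k => ¬ k ≤ i' ∧ j' ≤ σ k := by
    rw [hBσ]; simp
  have hiB' : i ∉ Finset.univ.filter fun k => ¬ k ≤ i' ∧ j' ≤ σ' k := by
    simp only [Finset.mem_filter, Finset.mem_univ, true_and, not_and]
    intro _
    have hσ'i : (σ' i : ℕ) = (j : ℕ) := congrArg Fin.val hij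
    rw [Fin.le_def, not_le]
    exact Fin.lt_def.mpr (by omega)
  have hsub : (Finset.univ.filter fun k => ¬ k ≤ i' ∧ j' ≤ σ' k)
      ⊆ (Finset.univ.filter fun k => ¬ k ≤ i' ∧ j' ≤ σ k).erase i := by
    intro k hkm
    have hk := (Finset.mem_filter.mp hkm).2
    refine Finset.mem_erase.mpr ⟨fun hE => hiB' (hE ▸ hkm), ?_⟩
    rw [hBσ]
    simp only [Finset.mem_filter, Finset.mem_univ, true_and, Fin.le_def]
    have h1 : ¬ (k : ℕ) ≤ (i' : ℕ) := fun hh => hk.1 (Fin.le_def.mpr hh)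
    omega
  have hBle : (Finset.univ.filter fun k => ¬ k ≤ i' ∧ j' ≤ σ k).card
      ≤ (Finset.univ.filter fun k => ¬ k ≤ i' ∧ j' ≤ σ' k).card := by
    have t1 := split σ
    have t2 := split σ'
    have t3 := key σ
    have t4 := key σ'
    omega
  have hcard : (Finset.univ.filter fun k => ¬ k ≤ i' ∧ j' ≤ σ' k).card
      ≤ (Finset.univ.filter fun k => ¬ k ≤ i' ∧ j' ≤ σ k).card - 1 := by
    calc _ ≤ ((Finset.univ.filter fun k => ¬ k ≤ i' ∧ j' ≤ σ k).erase i).card :=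
        Finset.card_le_card hsub
      _ = _ := Finset.card_erase_of_mem hiB
  have hpos : 0 < (Finset.univ.filter fun k => ¬ k ≤ i' ∧ j' ≤ σ k).card :=
    Finset.card_pos.mpr ⟨i, hiB⟩
  omega

/-- Lemma A.3 (lem_ferrers): if `σ ∈ S_N` (with `N = n+1 ≥ 1`) avoids the pattern `3412`,
then either columns `σ(N)` and `N` of `Γ[id,σ]` are identical, or rows `σ⁻¹(N)` and `N`
of `Γ[id,σ]` are identical. (The last row/column index `N` is `Fin.last n`.) -/
theorem statement12 {n : ℕ} (σ : Equiv.Perm (Fin (n + 1)))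
    (hav : Avoids σ perm3412) :
    (∀ i : Fin (n + 1),
        (i, σ (Fin.last n)) ∈ Gamma σ ↔ (i, Fin.last n) ∈ Gamma σ) ∨
    (∀ j : Fin (n + 1),
        (σ⁻¹ (Fin.last n), j) ∈ Gamma σ ↔ (Fin.last n, j) ∈ Gamma σ) := by
  classical
  set L : Fin (n+1) := Fin.last n with hL
  set b : Fin (n+1) := σ⁻¹ L with hbdef
  have hσb : σ b = L := σ.apply_symm_apply L
  by_cases hQ : ∀ k, b ≤ k → σ L ≤ σ k
  · right
    intro j
    have h1 : (L, j) ∈ Gamma σ ↔ σ L ≤ j := by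
      constructor
      · intro h
        obtain ⟨k, hk1, hk2⟩ := nec2 h
        have hkL : k = L := le_antisymm (Fin.le_last k) hk1
        rw [hkL] at hk2
        exact hk2
      · intro h
        refine ⟨σ * Equiv.swap (σ⁻¹ j) L, swapLE σ _ _ (Fin.le_last _) ?_, ?_⟩
        · rw [Equiv.Perm.coe_inv, Equiv.apply_symm_apply]; exact h
        · simp only [Equiv.Perm.mul_apply, Equiv.swap_apply_right, Equiv.Perm.coe_inv, Equiv.apply_symm_apply]
    have h2 : (b, j) ∈ Gamma σ ↔ σ L ≤ j := by
      constructor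
      · intro h
        obtain ⟨k, hk1, hk2⟩ := nec2 h
        exact le_trans (hQ k hk1) hk2
      · intro h
        by_cases hcb : b ≤ σ⁻¹ j
        · refine ⟨σ * Equiv.swap b (σ⁻¹ j), swapLE σ _ _ hcb ?_, ?_⟩
          · rw [Equiv.Perm.coe_inv, Equiv.apply_symm_apply, hσb]; exact Fin.le_last _
          · simp only [Equiv.Perm.mul_apply, Equiv.swap_apply_left, Equiv.Perm.coe_inv, Equiv.apply_symm_apply]
        · push_neg at hcb
          have hcne : σ⁻¹ j ≠ b := ne_of_lt hcb
          have hcnL : σ⁻¹ j ≠ L := ne_of_lt (lt_of_lt_of_le hcb (Fin.le_last b))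
          refine ⟨(σ * Equiv.swap b L) * Equiv.swap (σ⁻¹ j) b,
            bruhatTrans (swapLE _ _ _ hcb.le ?_)
              (swapLE σ b L (Fin.le_last _) (by rw [hσb]; exact Fin.le_last _)), ?_⟩
          · simp only [Equiv.Perm.mul_apply, Equiv.swap_apply_left,
              Equiv.swap_apply_of_ne_of_ne hcne hcnL]
            rw [Equiv.Perm.coe_inv, Equiv.apply_symm_apply]
            exact h
          · simp only [Equiv.Perm.mul_apply, Equiv.swap_apply_right,
              Equiv.swap_apply_of_ne_of_ne hcne hcnL]
            rw [Equiv.Perm.coe_inv, Equiv.apply_symm_apply]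
    exact h2.trans h1.symm
  · by_cases hP : ∀ k, k < b → σ k < σ L
    · left
      intro i
      have h1 : (i, L) ∈ Gamma σ ↔ b ≤ i := by
        constructor
        · intro h
          obtain ⟨k, hk1, hk2⟩ := nec1 h
          have hkL : σ k = L := le_antisymm (Fin.le_last _) hk2
          have : k = b := by rw [hbdef, ← hkL, Equiv.Perm.coe_inv, Equiv.symm_apply_apply]
          exact this ▸ hk1
        · intro hbi
          refine ⟨σ * Equiv.swap b i, swapLE σ _ _ hbi (by rw [hσb]; exact Fin.le_last _), ?_⟩
          simp only [Equiv.Perm.mul_apply, Equiv.swap_apply_right, hσb]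
      have h2 : (i, σ L) ∈ Gamma σ ↔ b ≤ i := by
        constructor
        · intro h
          obtain ⟨k, hk1, hk2⟩ := nec1 h
          by_contra hbi
          push_neg at hbi
          exact absurd hk2 (not_le_of_gt (hP k (lt_of_le_of_lt hk1 hbi)))
        · intro hbi
          by_cases hv : σ L ≤ σ i
          · refine ⟨σ * Equiv.swap i L, swapLE σ _ _ (Fin.le_last _) hv, ?_⟩
            simp only [Equiv.Perm.mul_apply, Equiv.swap_apply_left]
          · push_neg at hv
            have hinL : i ≠ L := fun hE => absurd hv (hE ▸ lt_irrefl _)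
            have hinb : i ≠ b := fun hE => absurd (lt_of_lt_of_le hv (Fin.le_last _))
              (by rw [hE, hσb]; exact lt_irrefl _)
            refine ⟨(σ * Equiv.swap b L) * Equiv.swap b i,
              bruhatTrans (swapLE _ _ _ hbi ?_)
                (swapLE σ b L (Fin.le_last _) (by rw [hσb]; exact Fin.le_last _)), ?_⟩
            · simp only [Equiv.Perm.mul_apply, Equiv.swap_apply_left,
                Equiv.swap_apply_of_ne_of_ne hinb hinL]
              exact hv.le
            · simp only [Equiv.Perm.mul_apply, Equiv.swap_apply_right, Equiv.swap_apply_left]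
      exact h2.trans h1.symm
    · exfalso
      push_neg at hQ hP
      obtain ⟨k2, hk2b, hk2v⟩ := hQ
      obtain ⟨k1, hk1b, hk1v⟩ := hP
      -- basic facts
      have hk1nb : k1 ≠ b := ne_of_lt hk1b
      have hk1nL : k1 ≠ L := ne_of_lt (lt_of_lt_of_le hk1b (Fin.le_last b))
      have hx1 : σ L < σ k1 := lt_of_le_of_ne hk1v (fun hE => hk1nL (σ.injective hE).symm)
      have hx2 : σ k1 < σ b := by
        rw [hσb]
        exact lt_of_le_of_ne (Fin.le_last _) (fun hE => hk1nb (by rw [hbdef, ← hE, Equiv.Perm.coe_inv, Equiv.symm_apply_apply]))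
      have hk2nb : k2 ≠ b := fun hE => absurd hk2v (by rw [hE, hσb]; exact not_lt_of_ge (Fin.le_last _))
      have hk2nL : k2 ≠ L := fun hE => absurd hk2v (hE ▸ lt_irrefl _)
      have hbk2 : b < k2 := lt_of_le_of_ne hk2b (Ne.symm hk2nb)
      have hk2L : k2 < L := lt_of_le_of_ne (Fin.le_last _) hk2nL
      apply hav
      have hmono : StrictMono ![k1, b, k2, L] := by
        rw [Fin.strictMono_iff_lt_succ]
        intro idx
        fin_cases idx
        · exact hk1b
        · exact hbk2
        · exact hk2L
      refine ⟨OrderEmbedding.ofStrictMono ![k1, b, k2, L] hmono, ?_⟩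
      intro s t
      have e1 : σ k2 < σ L := hk2v
      have e2 : σ L < σ k1 := hx1
      have e3 : σ k1 < σ b := hx2
      fin_cases s <;> fin_cases t
      · exact iff_of_false (lt_irrefl _) (by decide)
      · exact iff_of_true e3 (by decide)
      · exact iff_of_false (asymm (e1.trans e2)) (by decide)
      · exact iff_of_false (asymm e2) (by decide)
      · exact iff_of_false (asymm e3) (by decide)
      · exact iff_of_false (lt_irrefl _) (by decide)
      · exact iff_of_false (asymm (e1.trans (e2.trans e3))) (by decide)
      · exact iff_of_false (asymm (e2.trans e3)) (by decide)
      · exact iff_of_true (e1.trans e2) (by decide)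
      · exact iff_of_true (e1.trans (e2.trans e3)) (by decide)
      · exact iff_of_false (lt_irrefl _) (by decide)
      · exact iff_of_true e1 (by decide)
      · exact iff_of_true e2 (by decide)
      · exact iff_of_true (e2.trans e3) (by decide)
      · exact iff_of_false (asymm e1) (by decide)
      · exact iff_of_false (lt_irrefl _) (by decide)
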